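/- arXiv:2205.06571 — 2 statements merged into one kernel-verified Lean document; each statement's English description precedes it below -/
import Mathlib

section
/- Let q = (q_n)_{n=0}^∞ be positive integers, c = (c^{(n)})_{n=0}^∞ with c^{(n)} = (c^{(n)}_0,…,c^{(n)}_{q_n}) positive integers, W^{(n)}_m ∈ ℝ^{c^{(n)}_m × c^{(n)}_{m−1}} weight matrices and b^{(n)}_m ∈ ℝ^{c^{(n)}_m} bias vectors. If for every choice of activation matrices J^{(n)}_m ∈ 𝒟_{c^{(n)}_m} both limits lim_{n→∞} A_n = lim_{n→∞} ∏_{k=0}^{n} (∏_{m=1}^{q_k} J^{(k)}_m W^{(k)}_m + J^{(k)}_{q_k}) and lim_{n→∞} B_n = lim_{n→∞} ∑_{k=0}^{n} ∑_{m=1}^{q_k} [∏_{k'=k+1}^{n} (∏_{m'=1}^{q_{k'}} J^{(k')}_{m'} W^{(k')}_{m'} + J^{(k')}_{q_{k'}})] (∏_{m'=m+1}^{q_k} J^{(k)}_{m'} W^{(k)}_{m'}) J^{(k)}_m b^{(k)}_m exist, then the sequence of neural networks (𝒩_{c,q,n})_{n=1}^∞ converges pointwise on [0,1]^{d_res}.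 -/
open Filter Matrix Topology
open scoped ENNReal

noncomputable section

/-- The ReLU activation applied componentwise. -/
def relu {d : ℕ} (x : Fin d → ℝ) : Fin d → ℝ := fun i => max (x i) 0

/-- Cast a vector along an equality of dimensions. -/
def castVec {a b : ℕ} (h : a = b) (v : Fin a → ℝ) : Fin b → ℝ := fun i => v (Fin.cast h.symm i)

/-- Cast a matrix along equalities of its dimensions. -/
def mcast {a a' b b' : ℕ} (ha : a = a') (hb : b = b') (M : Matrix (Fin a) (Fin b) ℝ) :
    Matrix (Fin a') (Fin b') ℝ :=
  M.submatrix (Fin.cast ha.symm) (Fin.cast hb.symm)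

/-- Outputs of consecutive fully connected ReLU layers:
`hiddenSeq c W b m x = (σ(W m ⬝ · + b m) ∘ ⋯ ∘ σ(W 1 ⬝ · + b 1)) x` (0-based weight indices). -/
def hiddenSeq (c : ℕ → ℕ) (W : ∀ m, Matrix (Fin (c (m+1))) (Fin (c m)) ℝ)
    (b : ∀ m, Fin (c (m+1)) → ℝ) : (m : ℕ) → (Fin (c 0) → ℝ) → Fin (c m) → ℝ
  | 0 => fun x => x
  | m+1 => fun x => relu ((W m).mulVec (hiddenSeq c W b m x) + b m)

/-- A residual block with `q` layers (`q ≥ 1`), shortcut connection added before the last ReLU. -/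
def resBlock (d q : ℕ) (hq : 0 < q) (c : ℕ → ℕ) (hc0 : c 0 = d) (hcq : c q = d)
    (W : ∀ m, Matrix (Fin (c (m+1))) (Fin (c m)) ℝ)
    (b : ∀ m, Fin (c (m+1)) → ℝ) (x : Fin d → ℝ) : Fin d → ℝ :=
  castVec (show c (q-1+1) = d from (congrArg c (Nat.succ_pred_eq_of_pos hq)).trans hcq)
    (relu ((W (q-1)).mulVec (hiddenSeq c W b (q-1) (castVec hc0.symm x))
      + castVec (show c (q-1+1) = d from
          (congrArg c (Nat.succ_pred_eq_of_pos hq)).trans hcq).symm x + b (q-1)))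

/-- The deep network with shortcut connections: composition of residual blocks `0,…,n`. -/
def resNet (d : ℕ) (q : ℕ → ℕ) (hq : ∀ n, 0 < q n) (c : ℕ → ℕ → ℕ)
    (hc0 : ∀ n, c n 0 = d) (hcq : ∀ n, c n (q n) = d)
    (W : ∀ n m, Matrix (Fin (c n (m+1))) (Fin (c n m)) ℝ)
    (b : ∀ n m, Fin (c n (m+1)) → ℝ) :
    ℕ → (Fin d → ℝ) → Fin d → ℝ
  | 0 => resBlock d (q 0) (hq 0) (c 0) (hc0 0) (hcq 0) (W 0) (b 0)
  | n+1 => fun x => resBlock d (q (n+1)) (hq (n+1)) (c (n+1)) (hc0 (n+1)) (hcq (n+1))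
      (W (n+1)) (b (n+1)) (resNet d q hq c hc0 hcq W b n x)

/-- `J` is a 0/1 diagonal (activation) matrix. -/
def IsActivation {a : ℕ} (J : Matrix (Fin a) (Fin a) ℝ) : Prop :=
  (∀ i, J i i = 0 ∨ J i i = 1) ∧ ∀ i j, i ≠ j → J i j = 0

/-- The pre-activation vector `z` has exactly the sign pattern prescribed by the
activation matrix `J`: positive on the support of `J` and `≤ 0` off it. -/
def inPattern {a : ℕ} (J : Matrix (Fin a) (Fin a) ℝ) (z : Fin a → ℝ) : Prop :=
  ∀ i, J i i = 1 ↔ 0 < z i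

/-- `x` lies in the activation domain of a single residual block w.r.t. `J`. -/
def blockDomain (d q : ℕ) (hq : 0 < q) (c : ℕ → ℕ) (hc0 : c 0 = d) (hcq : c q = d)
    (W : ∀ m, Matrix (Fin (c (m+1))) (Fin (c m)) ℝ)
    (b : ∀ m, Fin (c (m+1)) → ℝ)
    (J : ∀ m, Matrix (Fin (c (m+1))) (Fin (c (m+1))) ℝ) (x : Fin d → ℝ) : Prop :=
  (∀ m, m + 1 < q →
    inPattern (J m) ((W m).mulVec (hiddenSeq c W b m (castVec hc0.symm x)) + b m)) ∧
  inPattern (J (q-1)) ((W (q-1)).mulVec (hiddenSeq c W b (q-1) (castVec hc0.symm x))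
    + castVec (show c (q-1+1) = d from
        (congrArg c (Nat.succ_pred_eq_of_pos hq)).trans hcq).symm x + b (q-1))

/-- The input fed to block `k` (output of the previous blocks; the input itself when `k = 0`). -/
def netInput (d : ℕ) (q : ℕ → ℕ) (hq : ∀ n, 0 < q n) (c : ℕ → ℕ → ℕ)
    (hc0 : ∀ n, c n 0 = d) (hcq : ∀ n, c n (q n) = d)
    (W : ∀ n m, Matrix (Fin (c n (m+1))) (Fin (c n m)) ℝ)
    (b : ∀ n m, Fin (c n (m+1)) → ℝ) :
    ℕ → (Fin d → ℝ) → Fin d → ℝ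
  | 0 => fun x => x
  | k+1 => resNet d q hq c hc0 hcq W b k

/-- Activation domain of the multi-residual-block network `𝒩_{c,q,n}` w.r.t. `J`:
`x ∈ [0,1]^d` and at each layer of each block the pre-activation has the pattern of `J`. -/
def InActDomain (d : ℕ) (q : ℕ → ℕ) (hq : ∀ n, 0 < q n) (c : ℕ → ℕ → ℕ)
    (hc0 : ∀ n, c n 0 = d) (hcq : ∀ n, c n (q n) = d)
    (W : ∀ n m, Matrix (Fin (c n (m+1))) (Fin (c n m)) ℝ)
    (b : ∀ n m, Fin (c n (m+1)) → ℝ)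
    (J : ∀ n m, Matrix (Fin (c n (m+1))) (Fin (c n (m+1))) ℝ)
    (n : ℕ) (x : Fin d → ℝ) : Prop :=
  (∀ i, x i ∈ Set.Icc (0:ℝ) 1) ∧
  ∀ k ≤ n, blockDomain d (q k) (hq k) (c k) (hc0 k) (hcq k) (W k) (b k) (J k)
    (netInput d q hq c hc0 hcq W b k x)

/-- `prodSeg f a n = f n * f (n-1) * ⋯ * f a` (the identity when `n < a`). -/
def prodSeg {α : Type*} [Monoid α] (f : ℕ → α) (a n : ℕ) : α :=
  ((List.range' a (n + 1 - a)).reverse.map f).prod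

/-- `innerProdFrom c W J a m = (J (a+m) W (a+m)) ⋯ (J (a+1) W (a+1)) (J a W a)`,
i.e. the product `∏_{m'=a+1}^{a+m} J_{m'} W_{m'}` in the 1-based indexing of the paper. -/
def innerProdFrom (c : ℕ → ℕ) (W : ∀ m, Matrix (Fin (c (m+1))) (Fin (c m)) ℝ)
    (J : ∀ m, Matrix (Fin (c (m+1))) (Fin (c (m+1))) ℝ) (a : ℕ) :
    (m : ℕ) → Matrix (Fin (c (a + m))) (Fin (c a)) ℝ
  | 0 => (1 : Matrix (Fin (c a)) (Fin (c a)) ℝ)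
  | m+1 => (J (a + m) * W (a + m)) * innerProdFrom c W J a m

/-- The matrix `∏_{m=1}^{q} J_m W_m + J_q` of a residual block. -/
def blockMat (d q : ℕ) (hq : 0 < q) (c : ℕ → ℕ) (hc0 : c 0 = d) (hcq : c q = d)
    (W : ∀ m, Matrix (Fin (c (m+1))) (Fin (c m)) ℝ)
    (J : ∀ m, Matrix (Fin (c (m+1))) (Fin (c (m+1))) ℝ) :
    Matrix (Fin d) (Fin d) ℝ :=
  mcast ((congrArg c (Nat.zero_add q)).trans hcq) hc0 (innerProdFrom c W J 0 q)
    + mcast (show c (q-1+1) = d from (congrArg c (Nat.succ_pred_eq_of_pos hq)).trans hcq)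
        (show c (q-1+1) = d from (congrArg c (Nat.succ_pred_eq_of_pos hq)).trans hcq) (J (q-1))

/-- `Aseq n = ∏_{k=0}^{n} (∏_{m=1}^{q_k} J^{(k)}_m W^{(k)}_m + J^{(k)}_{q_k})`. -/
def Aseq (d : ℕ) (q : ℕ → ℕ) (hq : ∀ n, 0 < q n) (c : ℕ → ℕ → ℕ)
    (hc0 : ∀ n, c n 0 = d) (hcq : ∀ n, c n (q n) = d)
    (W : ∀ n m, Matrix (Fin (c n (m+1))) (Fin (c n m)) ℝ)
    (J : ∀ n m, Matrix (Fin (c n (m+1))) (Fin (c n (m+1))) ℝ) (n : ℕ) :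
    Matrix (Fin d) (Fin d) ℝ :=
  prodSeg (fun k => blockMat d (q k) (hq k) (c k) (hc0 k) (hcq k) (W k) (J k)) 0 n

/-- `∑_{m=1}^{q} (∏_{m'=m+1}^{q} J_{m'} W_{m'}) J_m b_m` for one residual block. -/
def blockBias (d q : ℕ) (c : ℕ → ℕ) (hcq : c q = d)
    (W : ∀ m, Matrix (Fin (c (m+1))) (Fin (c m)) ℝ)
    (b : ∀ m, Fin (c (m+1)) → ℝ)
    (J : ∀ m, Matrix (Fin (c (m+1))) (Fin (c (m+1))) ℝ) : Fin d → ℝ :=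
  ∑ m ∈ (Finset.range q).attach,
    (mcast ((congrArg c (Nat.add_sub_cancel' (Finset.mem_range.mp m.2))).trans hcq) rfl
        (innerProdFrom c W J (m.1+1) (q - (m.1+1)))).mulVec ((J m.1).mulVec (b m.1))

/-- `Bseq n = ∑_{k=0}^{n} ∑_{m=1}^{q_k} [∏_{k'=k+1}^{n} (∏_{m'} J W + J)] (∏_{m'>m} J W) J_m b_m`. -/
def Bseq (d : ℕ) (q : ℕ → ℕ) (hq : ∀ n, 0 < q n) (c : ℕ → ℕ → ℕ)
    (hc0 : ∀ n, c n 0 = d) (hcq : ∀ n, c n (q n) = d)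
    (W : ∀ n m, Matrix (Fin (c n (m+1))) (Fin (c n m)) ℝ)
    (b : ∀ n m, Fin (c n (m+1)) → ℝ)
    (J : ∀ n m, Matrix (Fin (c n (m+1))) (Fin (c n (m+1))) ℝ) (n : ℕ) : Fin d → ℝ :=
  ∑ k ∈ Finset.range (n+1),
    (prodSeg (fun k' => blockMat d (q k') (hq k') (c k') (hc0 k') (hcq k') (W k') (J k'))
        (k+1) n).mulVec
      (blockBias d (q k) (c k) (hcq k) (W k) (b k) (J k))

/-- A family of norms on the spaces `ℝ^m` which is monotone in the sense of the paper. -/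
structure NormFamily where
  N : ∀ m : ℕ, (Fin m → ℝ) → ℝ
  eq_zero_iff : ∀ (m : ℕ) (x : Fin m → ℝ), N m x = 0 ↔ x = 0
  add_le : ∀ (m : ℕ) (x y : Fin m → ℝ), N m (x + y) ≤ N m x + N m y
  smul_eq : ∀ (m : ℕ) (r : ℝ) (x : Fin m → ℝ), N m (r • x) = |r| * N m x
  mono : ∀ (m : ℕ) (x y : Fin m → ℝ), (∀ i, |x i| ≤ |y i|) → N m x ≤ N m y

/-- The operator (matrix) norm induced by a family of vector norms. -/
def NormFamily.op (F : NormFamily) {a b : ℕ} (M : Matrix (Fin a) (Fin b) ℝ) : ℝ :=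
  sSup ((fun x => F.N a (M.mulVec x) / F.N b x) '' {x : Fin b → ℝ | x ≠ 0})

/-- 1-D Toeplitz convolution-with-zero-padding matrix of a filter mask `u ∈ ℝ^{2f+1}`:
`(T1 f d u) a b = u (f - b + a)` when `-f ≤ b - a ≤ f` and `0` otherwise. -/
def T1 (f d : ℕ) (u : Fin (2*f+1) → ℝ) : Matrix (Fin d) (Fin d) ℝ :=
  fun a b =>
    if h : -(f:ℤ) ≤ ((b:ℕ):ℤ) - ((a:ℕ):ℤ) ∧ ((b:ℕ):ℤ) - ((a:ℕ):ℤ) ≤ (f:ℤ) then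
      u ⟨((f:ℤ) - ((b:ℕ):ℤ) + ((a:ℕ):ℤ)).toNat, by omega⟩
    else 0

/-- 2-D block Toeplitz convolution matrix of a mask `v ∈ ℝ^{(2f+1)×(2f+1)}`:
the `(a,b)` block is `T1 f d (v (f - b + a))` when `-f ≤ b - a ≤ f` and `0` otherwise. -/
def T2 (f d : ℕ) (v : Fin (2*f+1) → Fin (2*f+1) → ℝ) :
    Matrix (Fin d × Fin d) (Fin d × Fin d) ℝ :=
  fun P Q =>
    if h : -(f:ℤ) ≤ ((Q.1:ℕ):ℤ) - ((P.1:ℕ):ℤ) ∧ ((Q.1:ℕ):ℤ) - ((P.1:ℕ):ℤ) ≤ (f:ℤ) then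
      T1 f d (v ⟨((f:ℤ) - ((Q.1:ℕ):ℤ) + ((P.1:ℕ):ℤ)).toNat, by omega⟩) P.2 Q.2
    else 0

/-- The block matrix `T(w)` of a multi-channel convolution
with `cin` input channels and `cout` output channels: the `(i,j)` block is `T2 f d (w i j)`. -/
def Tmulti (f d cin cout : ℕ)
    (w : Fin cout → Fin cin → Fin (2*f+1) → Fin (2*f+1) → ℝ) :
    Matrix (Fin cout × Fin d × Fin d) (Fin cin × Fin d × Fin d) ℝ :=
  fun P Q => T2 f d (w P.1 Q.1) P.2 Q.2

/-- Multi-channel 2-D convolution with zero padding, as matrix-vector multiplication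
by the Toeplitz-type matrices `T2`. -/
def convLayer (f d cin cout : ℕ)
    (w : Fin cout → Fin cin → Fin (2*f+1) → Fin (2*f+1) → ℝ)
    (x : Fin cin → Fin d → Fin d → ℝ) : Fin cout → Fin d → Fin d → ℝ :=
  fun i a b => ∑ j, ∑ s, ∑ t, T2 f d (w i j) (a, b) (s, t) * x j s t

/-- Cast the channel index of a tensor along an equality of channel numbers. -/
def castChan {d a b : ℕ} (h : a = b) (x : Fin a → Fin d → Fin d → ℝ) :
    Fin b → Fin d → Fin d → ℝ :=
  fun i => x (Fin.cast h.symm i)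

/-- Hidden layers of a convolutional residual block (with constant-per-channel biases `β`). -/
def convHidden (d : ℕ) (c : ℕ → ℕ) (f : ℕ → ℕ)
    (w : ∀ m, Fin (c (m+1)) → Fin (c m) → Fin (2 * f m + 1) → Fin (2 * f m + 1) → ℝ)
    (β : ∀ m, Fin (c (m+1)) → ℝ) :
    (m : ℕ) → (Fin (c 0) → Fin d → Fin d → ℝ) → Fin (c m) → Fin d → Fin d → ℝ
  | 0 => fun x => x
  | m+1 => fun x i a b =>
      max (convLayer (f m) d (c m) (c (m+1)) (w m) (convHidden d c f w β m x) i a b + β m i) 0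

/-- A convolutional residual block with `Q ≥ 1` convolutional layers and a shortcut connection. -/
def convBlock (d Q : ℕ) (hQ : 0 < Q) (cres : ℕ) (c : ℕ → ℕ)
    (hc0 : c 0 = cres) (hcq : c Q = cres) (f : ℕ → ℕ)
    (w : ∀ m, Fin (c (m+1)) → Fin (c m) → Fin (2 * f m + 1) → Fin (2 * f m + 1) → ℝ)
    (β : ∀ m, Fin (c (m+1)) → ℝ)
    (x : Fin cres → Fin d → Fin d → ℝ) : Fin cres → Fin d → Fin d → ℝ :=
  castChan (show c (Q-1+1) = cres from (congrArg c (Nat.succ_pred_eq_of_pos hQ)).trans hcq)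
    (fun i a b =>
      max (convLayer (f (Q-1)) d (c (Q-1)) (c (Q-1+1)) (w (Q-1))
            (convHidden d c f w β (Q-1) (castChan hc0.symm x)) i a b
          + x (Fin.cast (show c (Q-1+1) = cres from
              (congrArg c (Nat.succ_pred_eq_of_pos hQ)).trans hcq) i) a b
          + β (Q-1) i) 0)

/-- The deep convolutional ResNet without the output layer: sampling layer
`σ(x ∗ w_s + b_s)` (block `0`) followed by the convolutional residual blocks `1,…,n`. -/
def convNet (d cin cres : ℕ) (q : ℕ → ℕ) (hq : ∀ n, 0 < q n)
    (c : ℕ → ℕ → ℕ) (hc00 : c 0 0 = cin) (h01 : c 0 1 = cres)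
    (hc0 : ∀ n, 0 < n → c n 0 = cres) (hcq : ∀ n, 0 < n → c n (q n) = cres)
    (f : ℕ → ℕ → ℕ)
    (w : ∀ n m, Fin (c n (m+1)) → Fin (c n m) → Fin (2 * f n m + 1) → Fin (2 * f n m + 1) → ℝ)
    (β : ∀ n m, Fin (c n (m+1)) → ℝ) :
    ℕ → (Fin cin → Fin d → Fin d → ℝ) → Fin cres → Fin d → Fin d → ℝ
  | 0 => fun x => castChan h01 (fun i a b =>
      max (convLayer (f 0 0) d (c 0 0) (c 0 1) (w 0 0) (castChan hc00.symm x) i a b + β 0 0 i) 0)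
  | n+1 => fun x =>
      convBlock d (q (n+1)) (hq (n+1)) cres (c (n+1)) (hc0 (n+1) (Nat.succ_pos n))
        (hcq (n+1) (Nat.succ_pos n)) (f (n+1)) (w (n+1)) (β (n+1))
        (convNet d cin cres q hq c hc00 h01 hc0 hcq f w β n x)

/-- The ℓ_p norm of a vector, `p ∈ [1,∞]`. -/
def lpNorm (p : ℝ≥0∞) {ι : Type*} [Fintype ι] (x : ι → ℝ) : ℝ :=
  if p = ∞ then ⨆ i, |x i| else (∑ i, |x i| ^ p.toReal) ^ (1 / p.toReal)

/-- The matrix (operator) norm induced by the ℓ_p vector norms. -/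
def opNormP (p : ℝ≥0∞) {α β : Type*} [Fintype α] [Fintype β] (M : Matrix α β ℝ) : ℝ :=
  sSup ((fun x => lpNorm p (M.mulVec x) / lpNorm p x) '' {x : β → ℝ | x ≠ 0})

/-- Maximum absolute column sum of a matrix (the operator norm induced by ℓ₁). -/
def maxColSum {α β : Type*} [Fintype α] [Fintype β] (M : Matrix α β ℝ) : ℝ :=
  ⨆ j, ∑ i, |M i j|

/-- Maximum absolute row sum of a matrix (the operator norm induced by ℓ_∞). -/
def maxRowSum {α β : Type*} [Fintype α] [Fintype β] (M : Matrix α β ℝ) : ℝ :=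
  ⨆ i, ∑ j, |M i j|

/-- The block matrix with blocks `A i j ∈ ℝ^{r×c}`, `i < N`, `j < M`. -/
def blockMatrixOf {N M r c : ℕ} (A : Fin N → Fin M → Matrix (Fin r) (Fin c) ℝ) :
    Matrix (Fin N × Fin r) (Fin M × Fin c) ℝ :=
  fun p q => A p.1 q.1 p.2 q.2

/-- The factor `N^{(n)}_m` of Theorem 5.2: the bound of Lemma 5.1 on `‖T(w)‖_p`. -/
def Nfactor (p : ℝ≥0∞) {f cin cout : ℕ}
    (w : Fin cout → Fin cin → Fin (2*f+1) → Fin (2*f+1) → ℝ) : ℝ :=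
  (⨆ j : Fin cin, ∑ i, ∑ i', ∑ j', |w i j i' j'|) ^ ((1/p).toReal)
    * (⨆ i : Fin cout, ∑ j, ∑ i', ∑ j', |w i j i' j'|) ^ (1 - (1/p).toReal)

/-- Zero padding of a vector `x ∈ ℝ^{din}` to a vector `(x, 0) ∈ ℝ^{d}`. -/
def padVec (din d : ℕ) (x : Fin din → ℝ) : Fin d → ℝ :=
  fun i => if h : (i : ℕ) < din then x ⟨i, h⟩ else 0

/-- The matrix `[Ws  0] ∈ ℝ^{d × d}` obtained by padding `Ws ∈ ℝ^{d × din}` with zero columns. -/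
def padMat (din d : ℕ) (Ws : Matrix (Fin d) (Fin din) ℝ) : Matrix (Fin d) (Fin d) ℝ :=
  fun i j => if h : (j : ℕ) < din then Ws i ⟨j, h⟩ else 0

-- cast toolbox
lemma castVec_castVec {a b c' : ℕ} (h1 : a = b) (h2 : b = c') (v : Fin a → ℝ) :
    castVec h2 (castVec h1 v) = castVec (h1.trans h2) v := rfl

lemma castVec_self {a : ℕ} (h : a = a) (v : Fin a → ℝ) : castVec h v = v := rfl

lemma mcast_mulVec {a a' b b' : ℕ} (ha : a = a') (hb : b = b') (M : Matrix (Fin a) (Fin b) ℝ)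
    (v : Fin b' → ℝ) : (mcast ha hb M).mulVec v = castVec ha (M.mulVec (castVec hb.symm v)) := by
  subst ha; subst hb; rfl

lemma castVec_add {a b : ℕ} (h : a = b) (u v : Fin a → ℝ) :
    castVec h (u + v) = castVec h u + castVec h v := rfl

lemma castVec_sum {a b : ℕ} (h : a = b) {ι : Type*} (s : Finset ι) (f : ι → Fin a → ℝ) :
    castVec h (∑ j ∈ s, f j) = ∑ j ∈ s, castVec h (f j) := by
  funext i; simp [castVec, Finset.sum_apply]

lemma mulVec_sum {a b : ℕ} (M : Matrix (Fin a) (Fin b) ℝ) {ι : Type*} (s : Finset ι)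
    (f : ι → Fin b → ℝ) : M.mulVec (∑ j ∈ s, f j) = ∑ j ∈ s, M.mulVec (f j) := by
  classical
  induction s using Finset.induction with
  | empty => simp
  | @insert a s h ih => rw [Finset.sum_insert h, Finset.sum_insert h, Matrix.mulVec_add, ih]

lemma relu_eq {a : ℕ} {J : Matrix (Fin a) (Fin a) ℝ} (hJ : IsActivation J)
    {z : Fin a → ℝ} (hz : inPattern J z) : relu z = J.mulVec z := by
  funext i
  have hd : J.mulVec z i = J i i * z i := by
    simp only [Matrix.mulVec, dotProduct]
    exact Finset.sum_eq_single i (fun j _ hji => by rw [hJ.2 i j (Ne.symm hji), zero_mul])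
      (by simp)
  rw [hd]
  rcases hJ.1 i with h0 | h1
  · have hnp : ¬ 0 < z i := fun hp => by rw [(hz i).mpr hp] at h0; norm_num at h0
    simp [relu, h0, max_eq_right (le_of_not_gt hnp)]
  · have hp := (hz i).mp h1
    simp [relu, h1, max_eq_left (le_of_lt hp)]

section Block
variable (c : ℕ → ℕ) (W : ∀ m, Matrix (Fin (c (m+1))) (Fin (c m)) ℝ)
  (b : ∀ m, Fin (c (m+1)) → ℝ) (J : ∀ m, Matrix (Fin (c (m+1))) (Fin (c (m+1))) ℝ)

lemma ip_mulVec_congr (a : ℕ) {m m' : ℕ} (h : m = m') (x : Fin (c a) → ℝ) :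
    (innerProdFrom c W J a m').mulVec x
      = castVec (congrArg c (by rw [h])) ((innerProdFrom c W J a m).mulVec x) := by
  subst h; rfl

lemma JW_cast {k k' : ℕ} (h : k = k') (u : Fin (c k) → ℝ) :
    (J k' * W k').mulVec (castVec (congrArg c h) u)
      = castVec (congrArg c (show k+1 = k'+1 by rw [h])) ((J k * W k).mulVec u) := by
  subst h; rfl

end Block


section Block2
variable (c : ℕ → ℕ) (W : ∀ m, Matrix (Fin (c (m+1))) (Fin (c m)) ℝ)
  (b : ∀ m, Fin (c (m+1)) → ℝ) (J : ∀ m, Matrix (Fin (c (m+1))) (Fin (c (m+1))) ℝ)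

def tailTerm (m j : ℕ) : Fin (c m) → ℝ :=
  if h : j < m then
    castVec (congrArg c (Nat.add_sub_cancel' h))
      ((innerProdFrom c W J (j+1) (m-(j+1))).mulVec ((J j).mulVec (b j)))
  else 0

lemma hidden_affine (hJ : ∀ m, IsActivation (J m)) (v : Fin (c 0) → ℝ) (m : ℕ)
    (hpat : ∀ j, j < m → inPattern (J j) ((W j).mulVec (hiddenSeq c W b j v) + b j)) :
    hiddenSeq c W b m v
      = castVec (congrArg c (Nat.zero_add m)) ((innerProdFrom c W J 0 m).mulVec v)
        + ∑ j ∈ Finset.range m, tailTerm c W b J m j := by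
  induction m with
  | zero =>
      simp only [Finset.range_zero, Finset.sum_empty, add_zero]
      show v = castVec _ ((1 : Matrix (Fin (c 0)) (Fin (c 0)) ℝ).mulVec v)
      rw [Matrix.one_mulVec]; rfl
  | succ m ih =>
      have hm : hiddenSeq c W b (m+1) v
          = (J m * W m).mulVec (hiddenSeq c W b m v) + (J m).mulVec (b m) := by
        show relu ((W m).mulVec (hiddenSeq c W b m v) + b m) = _
        rw [relu_eq (hJ m) (hpat m (Nat.lt_succ_self m)), Matrix.mulVec_add,
          Matrix.mulVec_mulVec]
      rw [hm, ih (fun j hj => hpat j (Nat.lt_succ_of_lt hj)), Matrix.mulVec_add,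
        mulVec_sum]
      have hT1 : (J m * W m).mulVec
            (castVec (congrArg c (Nat.zero_add m)) ((innerProdFrom c W J 0 m).mulVec v))
          = castVec (congrArg c (Nat.zero_add (m+1))) ((innerProdFrom c W J 0 (m+1)).mulVec v) := by
        rw [JW_cast c W J (Nat.zero_add m), Matrix.mulVec_mulVec]; rfl
      have hT2 : ∀ j ∈ Finset.range m,
          (J m * W m).mulVec (tailTerm c W b J m j) = tailTerm c W b J (m+1) j := by
        intro j hj
        have hjm : j < m := Finset.mem_range.mp hj
        have hjm1 : j < m + 1 := Nat.lt_succ_of_lt hjm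
        rw [tailTerm, tailTerm, dif_pos hjm, dif_pos hjm1,
          JW_cast c W J (Nat.add_sub_cancel' hjm), Matrix.mulVec_mulVec,
          ip_mulVec_congr c W J (j+1) (show m - (j+1) + 1 = m + 1 - (j+1) by omega)]
        rfl
      have hT3 : (J m).mulVec (b m) = tailTerm c W b J (m+1) m := by
        rw [tailTerm, dif_pos (Nat.lt_succ_self m),
          ip_mulVec_congr c W J (m+1) (show 0 = m + 1 - (m+1) by omega),
          show innerProdFrom c W J (m+1) 0 = 1 from rfl, Matrix.one_mulVec]
        rfl
      rw [hT1, Finset.sum_congr rfl hT2, hT3, Finset.sum_range_succ]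
      abel
end Block2

section Block3
variable {d : ℕ} {c : ℕ → ℕ} {W : ∀ m, Matrix (Fin (c (m+1))) (Fin (c m)) ℝ}
  {b : ∀ m, Fin (c (m+1)) → ℝ} {J : ∀ m, Matrix (Fin (c (m+1))) (Fin (c (m+1))) ℝ}

lemma blockBias_eq_sum (q' : ℕ) (hcq : c (q'+1) = d) :
    blockBias d (q'+1) c hcq W b J
      = ∑ j ∈ Finset.range (q'+1),
          if h : j < q'+1 then
            castVec ((congrArg c (Nat.add_sub_cancel' h)).trans hcq)
              ((innerProdFrom c W J (j+1) (q'+1-(j+1))).mulVec ((J j).mulVec (b j)))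
          else 0 := by
  unfold blockBias
  rw [← Finset.sum_attach (Finset.range (q'+1))
    (fun j => if h : j < q'+1 then
        castVec ((congrArg c (Nat.add_sub_cancel' h)).trans hcq)
          ((innerProdFrom c W J (j+1) (q'+1-(j+1))).mulVec ((J j).mulVec (b j)))
      else 0)]
  refine Finset.sum_congr rfl (fun m _ => ?_)
  rw [dif_pos (Finset.mem_range.mp m.2), mcast_mulVec]
  rfl

lemma block_eq (q : ℕ) (hq : 0 < q) (hc0 : c 0 = d) (hcq : c q = d)
    (hJ : ∀ m, IsActivation (J m)) (x : Fin d → ℝ)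
    (hdom : blockDomain d q hq c hc0 hcq W b J x) :
    resBlock d q hq c hc0 hcq W b x
      = (blockMat d q hq c hc0 hcq W J).mulVec x + blockBias d q c hcq W b J := by
  obtain ⟨q', rfl⟩ : ∃ q', q = q'+1 := ⟨q-1, (Nat.succ_pred_eq_of_pos hq).symm⟩
  have hpat : ∀ j, j < q' → inPattern (J j)
      ((W j).mulVec (hiddenSeq c W b j (castVec hc0.symm x)) + b j) :=
    fun j hj => hdom.1 j (by omega)
  have hlast : inPattern (J q') ((W q').mulVec (hiddenSeq c W b q' (castVec hc0.symm x))
      + castVec hcq.symm x + b q') := hdom.2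
  show castVec hcq (relu ((W q').mulVec (hiddenSeq c W b q' (castVec hc0.symm x))
      + castVec hcq.symm x + b q')) = _
  rw [relu_eq (hJ q') hlast, Matrix.mulVec_add, Matrix.mulVec_add, Matrix.mulVec_mulVec,
    hidden_affine c W b J hJ (castVec hc0.symm x) q' hpat, Matrix.mulVec_add, mulVec_sum,
    castVec_add, castVec_add, castVec_add, castVec_sum]
  -- now match pieces
  have hT1 : castVec hcq ((J q' * W q').mulVec
        (castVec (congrArg c (Nat.zero_add q')) ((innerProdFrom c W J 0 q').mulVec (castVec hc0.symm x))))
      = (mcast ((congrArg c (Nat.zero_add (q'+1))).trans hcq) hc0 (innerProdFrom c W J 0 (q'+1))).mulVec x := by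
    rw [JW_cast c W J (Nat.zero_add q'), Matrix.mulVec_mulVec, mcast_mulVec]
    rfl
  have hT3 : castVec hcq ((J q').mulVec (castVec hcq.symm x))
      = (mcast (show c (q'+1-1+1) = d from (congrArg c (Nat.succ_pred_eq_of_pos hq)).trans hcq)
          (show c (q'+1-1+1) = d from (congrArg c (Nat.succ_pred_eq_of_pos hq)).trans hcq)
          (J (q'+1-1))).mulVec x := by
    rw [mcast_mulVec]
    rfl
  have hT24 : (∑ j ∈ Finset.range q',
        castVec hcq ((J q' * W q').mulVec (tailTerm c W b J q' j)))
        + castVec hcq ((J q').mulVec (b q'))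
      = blockBias d (q'+1) c hcq W b J := by
    rw [blockBias_eq_sum q' hcq, Finset.sum_range_succ]
    congr 1
    · refine Finset.sum_congr rfl (fun j hj => ?_)
      have hjq : j < q' := Finset.mem_range.mp hj
      rw [tailTerm, dif_pos hjq, dif_pos (Nat.lt_succ_of_lt hjq),
        JW_cast c W J (Nat.add_sub_cancel' hjq), Matrix.mulVec_mulVec,
        ip_mulVec_congr c W J (j+1) (show q' - (j+1) + 1 = q' + 1 - (j+1) by omega)]
      rfl
    · rw [dif_pos (Nat.lt_succ_self q'),
        ip_mulVec_congr c W J (q'+1) (show 0 = q' + 1 - (q'+1) by omega),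
        show innerProdFrom c W J (q'+1) 0 = 1 from rfl, Matrix.one_mulVec]
      rfl
  rw [hT1, hT3, ← hT24,
    show blockMat d (q'+1) hq c hc0 hcq W J
      = mcast ((congrArg c (Nat.zero_add (q'+1))).trans hcq) hc0 (innerProdFrom c W J 0 (q'+1))
        + mcast (show c (q'+1-1+1) = d from (congrArg c (Nat.succ_pred_eq_of_pos hq)).trans hcq)
            (show c (q'+1-1+1) = d from (congrArg c (Nat.succ_pred_eq_of_pos hq)).trans hcq)
            (J (q'+1-1)) from rfl,
    Matrix.add_mulVec]
  abel
end Block3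

lemma prodSeg_succ {α : Type*} [Monoid α] (f : ℕ → α) (a n : ℕ) (h : a ≤ n+1) :
    prodSeg f a (n+1) = f (n+1) * prodSeg f a n := by
  unfold prodSeg
  rw [show n+1+1-a = (n+1-a)+1 by omega, List.range'_concat,
    show a + 1 * (n + 1 - a) = n + 1 by omega]
  simp

lemma prodSeg_top {α : Type*} [Monoid α] (f : ℕ → α) (n : ℕ) : prodSeg f (n+1) n = 1 := by
  unfold prodSeg
  rw [show n+1-(n+1) = 0 by omega]
  simp

lemma prodSeg_self {α : Type*} [Monoid α] (f : ℕ → α) (a : ℕ) : prodSeg f a a = f a := by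
  unfold prodSeg
  rw [show a+1-a = 1 by omega]
  simp

section Net
variable {d : ℕ} {q : ℕ → ℕ} {hq : ∀ n, 0 < q n} {c : ℕ → ℕ → ℕ}
  {hc0 : ∀ n, c n 0 = d} {hcq : ∀ n, c n (q n) = d}
  {W : ∀ n m, Matrix (Fin (c n (m+1))) (Fin (c n m)) ℝ}
  {b : ∀ n m, Fin (c n (m+1)) → ℝ}
  {J : ∀ n m, Matrix (Fin (c n (m+1))) (Fin (c n (m+1))) ℝ}

lemma net_eq (hJ : ∀ k m, IsActivation (J k m)) (x : Fin d → ℝ)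
    (hdom : ∀ k, blockDomain d (q k) (hq k) (c k) (hc0 k) (hcq k) (W k) (b k) (J k)
      (netInput d q hq c hc0 hcq W b k x)) (n : ℕ) :
    resNet d q hq c hc0 hcq W b n x
      = (Aseq d q hq c hc0 hcq W J n).mulVec x + Bseq d q hq c hc0 hcq W b J n := by
  induction n with
  | zero =>
      have h0 := block_eq (q 0) (hq 0) (hc0 0) (hcq 0) (hJ 0) x (hdom 0)
      rw [show resNet d q hq c hc0 hcq W b 0 x
          = resBlock d (q 0) (hq 0) (c 0) (hc0 0) (hcq 0) (W 0) (b 0) x from rfl, h0]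
      rw [show Aseq d q hq c hc0 hcq W J 0
          = blockMat d (q 0) (hq 0) (c 0) (hc0 0) (hcq 0) (W 0) (J 0) from prodSeg_self _ 0]
      rw [show Bseq d q hq c hc0 hcq W b J 0
          = (prodSeg (fun k' => blockMat d (q k') (hq k') (c k') (hc0 k') (hcq k') (W k') (J k'))
              1 0).mulVec (blockBias d (q 0) (c 0) (hcq 0) (W 0) (b 0) (J 0)) from by
            unfold Bseq; simp]
      rw [prodSeg_top, Matrix.one_mulVec]
  | succ n ih =>
      have hstep := block_eq (q (n+1)) (hq (n+1)) (hc0 (n+1)) (hcq (n+1)) (hJ (n+1))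
        (resNet d q hq c hc0 hcq W b n x) (hdom (n+1))
      rw [show resNet d q hq c hc0 hcq W b (n+1) x
          = resBlock d (q (n+1)) (hq (n+1)) (c (n+1)) (hc0 (n+1)) (hcq (n+1)) (W (n+1)) (b (n+1))
              (resNet d q hq c hc0 hcq W b n x) from rfl, hstep, ih]
      have M : ℕ → Matrix (Fin d) (Fin d) ℝ := fun k' => blockMat d (q k') (hq k') (c k') (hc0 k') (hcq k') (W k') (J k')
      have hA : Aseq d q hq c hc0 hcq W J (n+1)
          = blockMat d (q (n+1)) (hq (n+1)) (c (n+1)) (hc0 (n+1)) (hcq (n+1)) (W (n+1)) (J (n+1))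
            * Aseq d q hq c hc0 hcq W J n :=
        prodSeg_succ _ 0 n (Nat.zero_le _)
      have hB : Bseq d q hq c hc0 hcq W b J (n+1)
          = (blockMat d (q (n+1)) (hq (n+1)) (c (n+1)) (hc0 (n+1)) (hcq (n+1)) (W (n+1)) (J (n+1))).mulVec
              (Bseq d q hq c hc0 hcq W b J n)
            + blockBias d (q (n+1)) (c (n+1)) (hcq (n+1)) (W (n+1)) (b (n+1)) (J (n+1)) := by
        unfold Bseq
        rw [Finset.sum_range_succ, prodSeg_top, Matrix.one_mulVec, mulVec_sum]
        congr 1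
        refine Finset.sum_congr rfl (fun k hk => ?_)
        rw [prodSeg_succ _ (k+1) n (by have := Finset.mem_range.mp hk; omega),
          ← Matrix.mulVec_mulVec]
      rw [hA, hB, Matrix.mulVec_add, Matrix.mulVec_mulVec]
      abel
end Net

theorem stmt1
    (d : ℕ) (hd : 0 < d)
    (q : ℕ → ℕ) (hq : ∀ k, 0 < q k)
    (c : ℕ → ℕ → ℕ) (hcpos : ∀ k m, m ≤ q k → 0 < c k m)
    (hc0 : ∀ k, c k 0 = d) (hcq : ∀ k, c k (q k) = d)
    (W : ∀ k m, Matrix (Fin (c k (m+1))) (Fin (c k m)) ℝ)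
    (b : ∀ k m, Fin (c k (m+1)) → ℝ)
    (hlim : ∀ J : ∀ k m, Matrix (Fin (c k (m+1))) (Fin (c k (m+1))) ℝ,
      (∀ k m, IsActivation (J k m)) →
        (∃ A, Tendsto (fun n => Aseq d q hq c hc0 hcq W J n) atTop (nhds A)) ∧
        (∃ B, Tendsto (fun n => Bseq d q hq c hc0 hcq W b J n) atTop (nhds B))) :
    ∀ x : Fin d → ℝ, (∀ i, x i ∈ Set.Icc (0:ℝ) 1) →
      ∃ y, Tendsto (fun n => resNet d q hq c hc0 hcq W b n x) atTop (nhds y) := by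
  intro x hx
  -- the pre-activation vectors along the trajectory of x
  set z : ∀ k m, Fin (c k (m+1)) → ℝ := fun k m =>
    (W k m).mulVec (hiddenSeq (c k) (W k) (b k) m
        (castVec (hc0 k).symm (netInput d q hq c hc0 hcq W b k x)))
      + (if h : m = q k - 1 then
          castVec (show d = c k (m+1) by
            rw [h]; exact ((congrArg (c k) (Nat.succ_pred_eq_of_pos (hq k))).trans (hcq k)).symm)
            (netInput d q hq c hc0 hcq W b k x)
         else 0)
      + b k m with hz
  set J : ∀ k m, Matrix (Fin (c k (m+1))) (Fin (c k (m+1))) ℝ := fun k m =>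
    Matrix.diagonal (fun i => if 0 < z k m i then 1 else 0) with hJdef
  have hJact : ∀ k m, IsActivation (J k m) := by
    intro k m
    constructor
    · intro i
      by_cases h : 0 < z k m i <;> simp [hJdef, Matrix.diagonal_apply_eq, h]
    · intro i j hij
      exact Matrix.diagonal_apply_ne _ hij
  have hJpat : ∀ k m, inPattern (J k m) (z k m) := by
    intro k m i
    by_cases h : 0 < z k m i <;> simp [hJdef, Matrix.diagonal_apply_eq, h]
  have hdom : ∀ k, blockDomain d (q k) (hq k) (c k) (hc0 k) (hcq k) (W k) (b k) (J k)
      (netInput d q hq c hc0 hcq W b k x) := by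
    intro k
    constructor
    · intro m hm
      have hmne : ¬ m = q k - 1 := by omega
      have hzeq : z k m = (W k m).mulVec (hiddenSeq (c k) (W k) (b k) m
          (castVec (hc0 k).symm (netInput d q hq c hc0 hcq W b k x))) + b k m := by
        rw [hz]; simp only [dif_neg hmne, add_zero]
      rw [← hzeq]
      exact hJpat k m
    · have hzeq : z k (q k - 1)
          = (W k (q k - 1)).mulVec (hiddenSeq (c k) (W k) (b k) (q k - 1)
              (castVec (hc0 k).symm (netInput d q hq c hc0 hcq W b k x)))
            + castVec (show c k (q k - 1 + 1) = d from
                (congrArg (c k) (Nat.succ_pred_eq_of_pos (hq k))).trans (hcq k)).symm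
                (netInput d q hq c hc0 hcq W b k x)
            + b k (q k - 1) := by
        rw [hz]; simp only [dif_pos rfl]; rfl
      rw [← hzeq]
      exact hJpat k (q k - 1)
  obtain ⟨⟨A, hA⟩, ⟨B, hB⟩⟩ := hlim J hJact
  refine ⟨A.mulVec x + B, ?_⟩
  have h1 : Filter.Tendsto (fun n => (Aseq d q hq c hc0 hcq W J n).mulVec x)
      Filter.atTop (nhds (A.mulVec x)) :=
    ((continuous_id.matrix_mulVec continuous_const).tendsto A).comp hA
  exact Filter.Tendsto.congr (fun n => (net_eq hJact x hdom n).symm) (h1.add hB)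

end
end

section
/- Let q = (q_n)_{n=0}^∞ be a bounded sequence of positive integers, let c^{(n)} = (c^{(n)}_0,…,c^{(n)}_{q_n}) be positive integers with c^{(n)}_0 = c^{(n)}_{q_n} = d_res for all n, and let W^{(n)}_m ∈ ℝ^{c^{(n)}_m × c^{(n)}_{m−1}} for 1 ≤ m ≤ q_n. If ∑_{n=0}^∞ ∏_{m=1}^{q_n} ‖W^{(n)}_m‖ < +∞, then for every choice of activation matrices J^{(n)}_m ∈ 𝒟_{c^{(n)}_m} the infinite product lim_{n→∞} ∏_{k=0}^{n} (∏_{m=1}^{q_k} J^{(k)}_m W^{(k)}_m + J^{(k)}_{q_k}) converges in ℝ^{d_res × d_res}. -/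
open Filter Matrix Topology
open scoped ENNReal

noncomputable section

namespace NormFamily
variable (F : NormFamily)

lemma N_zero (m : ℕ) : F.N m 0 = 0 := (F.eq_zero_iff m 0).mpr rfl

lemma N_nonneg (m : ℕ) (x : Fin m → ℝ) : 0 ≤ F.N m x := by
  have h := F.add_le m x (-x)
  have h2 : F.N m (-x) = F.N m x := by
    have := F.smul_eq m (-1) x
    simpa using this
  have h3 : F.N m (x + -x) = 0 := by simpa using F.N_zero m
  nlinarith

lemma N_pos (m : ℕ) (x : Fin m → ℝ) (hx : x ≠ 0) : 0 < F.N m x := by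
  rcases lt_or_eq_of_le (F.N_nonneg m x) with h | h
  · exact h
  · exact absurd ((F.eq_zero_iff m x).mp h.symm) hx

lemma N_single_pos (m : ℕ) (j : Fin m) : 0 < F.N m (Pi.single j 1) := by
  apply F.N_pos
  intro h
  have := congrFun h j
  simp at this

/-- columns decomposition bound -/
lemma N_mulVec_le_sum (a b : ℕ) (M : Matrix (Fin a) (Fin b) ℝ) (x : Fin b → ℝ) :
    F.N a (M.mulVec x) ≤ (∑ j, F.N a (fun i => M i j) / F.N b (Pi.single j 1)) * F.N b x := by
  have hdecomp : M.mulVec x = ∑ j, x j • (fun i => M i j) := by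
    ext i
    simp [Matrix.mulVec, dotProduct, mul_comm]
  rw [hdecomp]
  calc F.N a (∑ j, x j • (fun i => M i j)) ≤ ∑ j, F.N a (x j • (fun i => M i j)) := by
        classical
        induction (Finset.univ : Finset (Fin b)) using Finset.cons_induction with
        | empty => simp [F.N_zero]
        | cons j s hj ih =>
          rw [Finset.sum_cons, Finset.sum_cons]
          exact le_trans (F.add_le a _ _) (by linarith)
    _ ≤ (∑ j, F.N a (fun i => M i j) / F.N b (Pi.single j 1)) * F.N b x := by
        rw [Finset.sum_mul]
        apply Finset.sum_le_sum
        intro j _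
        rw [F.smul_eq]
        rw [div_mul_eq_mul_div, mul_comm (F.N a fun i => M i j), mul_div_assoc]
        have key : |x j| * F.N b (Pi.single j 1) ≤ F.N b x := by
          rw [← F.smul_eq]
          apply F.mono
          intro i
          by_cases h : i = j
          · subst h; simp
          · simp [Pi.single_apply, h]
        have hNs := F.N_single_pos b j
        have hNcol := F.N_nonneg a (fun i => M i j)
        have h1 : |x j| ≤ F.N b x / F.N b (Pi.single j 1) := (le_div_iff₀ hNs).mpr key
        calc |x j| * F.N a (fun i => M i j)
            ≤ (F.N b x / F.N b (Pi.single j 1)) * F.N a (fun i => M i j) :=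
              mul_le_mul_of_nonneg_right h1 hNcol
          _ = F.N b x * ((F.N a fun i => M i j) / F.N b (Pi.single j 1)) := by ring

lemma op_nonneg (a b : ℕ) (M : Matrix (Fin a) (Fin b) ℝ) : 0 ≤ F.op M := by
  apply Real.sSup_nonneg
  rintro r ⟨x, hx, rfl⟩
  exact div_nonneg (F.N_nonneg _ _) (F.N_nonneg _ _)

lemma N_mulVec_le (a b : ℕ) (M : Matrix (Fin a) (Fin b) ℝ) (x : Fin b → ℝ) :
    F.N a (M.mulVec x) ≤ F.op M * F.N b x := by
  by_cases hx : x = 0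
  · subst hx
    simp [Matrix.mulVec_zero, F.N_zero]
  · have hNx := F.N_pos b x hx
    have hbdd : BddAbove ((fun x => F.N a (M.mulVec x) / F.N b x) '' {x : Fin b → ℝ | x ≠ 0}) := by
      refine ⟨∑ j, F.N a (fun i => M i j) / F.N b (Pi.single j 1), ?_⟩
      rintro r ⟨y, hy, rfl⟩
      have hNy := F.N_pos b y hy
      rw [div_le_iff₀ hNy]
      exact F.N_mulVec_le_sum a b M y
    have hmem : F.N a (M.mulVec x) / F.N b x ∈
        ((fun x => F.N a (M.mulVec x) / F.N b x) '' {x : Fin b → ℝ | x ≠ 0}) :=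
      ⟨x, hx, rfl⟩
    have := le_csSup hbdd hmem
    rw [div_le_iff₀ hNx] at this
    exact this

lemma op_le (a b : ℕ) (M : Matrix (Fin a) (Fin b) ℝ) (C : ℝ) (hC : 0 ≤ C)
    (h : ∀ x, F.N a (M.mulVec x) ≤ C * F.N b x) : F.op M ≤ C := by
  apply Real.sSup_le _ hC
  rintro r ⟨x, hx, rfl⟩
  rw [div_le_iff₀ (F.N_pos b x hx)]
  exact h x

lemma op_mul_le (a b c : ℕ) (A : Matrix (Fin a) (Fin b) ℝ) (B : Matrix (Fin b) (Fin c) ℝ) :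
    F.op (A * B) ≤ F.op A * F.op B := by
  apply F.op_le _ _ _ _ (mul_nonneg (F.op_nonneg _ _ _) (F.op_nonneg _ _ _))
  intro x
  rw [← Matrix.mulVec_mulVec]
  calc F.N a (A.mulVec (B.mulVec x)) ≤ F.op A * F.N b (B.mulVec x) := F.N_mulVec_le _ _ _ _
    _ ≤ F.op A * (F.op B * F.N c x) :=
        mul_le_mul_of_nonneg_left (F.N_mulVec_le _ _ _ _) (F.op_nonneg _ _ _)
    _ = F.op A * F.op B * F.N c x := by ring

lemma op_add_le (a b : ℕ) (A B : Matrix (Fin a) (Fin b) ℝ) :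
    F.op (A + B) ≤ F.op A + F.op B := by
  apply F.op_le _ _ _ _ (add_nonneg (F.op_nonneg _ _ _) (F.op_nonneg _ _ _))
  intro x
  rw [Matrix.add_mulVec]
  calc F.N a (A.mulVec x + B.mulVec x) ≤ F.N a (A.mulVec x) + F.N a (B.mulVec x) :=
        F.add_le _ _ _
    _ ≤ F.op A * F.N b x + F.op B * F.N b x :=
        add_le_add (F.N_mulVec_le _ _ _ _) (F.N_mulVec_le _ _ _ _)
    _ = (F.op A + F.op B) * F.N b x := by ring

lemma op_one_le (a : ℕ) : F.op (1 : Matrix (Fin a) (Fin a) ℝ) ≤ 1 := by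
  apply F.op_le _ _ _ _ zero_le_one
  intro x
  simp [Matrix.one_mulVec]

lemma entry_abs_le (a b : ℕ) (M : Matrix (Fin a) (Fin b) ℝ) (i : Fin a) (j : Fin b) :
    |M i j| ≤ F.op M * (F.N b (Pi.single j 1) / F.N a (Pi.single i 1)) := by
  have hcol : M.mulVec (Pi.single j 1) = fun i' => M i' j := by
    ext i'
    simp [Matrix.mulVec_single]
  have h1 : |M i j| * F.N a (Pi.single i 1) ≤ F.N a (M.mulVec (Pi.single j 1)) := by
    rw [← F.smul_eq, hcol]
    apply F.mono
    intro i'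
    by_cases h : i' = i
    · subst h; simp
    · simp [Pi.single_apply, h]
  have h2 : F.N a (M.mulVec (Pi.single j 1)) ≤ F.op M * F.N b (Pi.single j 1) :=
    F.N_mulVec_le _ _ _ _
  have hNs := F.N_single_pos a i
  rw [show F.op M * (F.N b (Pi.single j 1) / F.N a (Pi.single i 1))
      = (F.op M * F.N b (Pi.single j 1)) / F.N a (Pi.single i 1) by ring,
    le_div_iff₀ hNs]
  exact le_trans h1 h2

end NormFamily

section Aux
variable (F : NormFamily)

lemma isActivation_mcast {a a' : ℕ} (h : a = a') (J : Matrix (Fin a) (Fin a) ℝ)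
    (hJ : IsActivation J) : IsActivation (mcast h h J) := by
  subst h
  simpa [mcast] using hJ

lemma op_mcast {a a' b b' : ℕ} (ha : a = a') (hb : b = b') (M : Matrix (Fin a) (Fin b) ℝ) :
    F.op (mcast ha hb M) = F.op M := by
  subst ha; subst hb
  rfl

lemma op_activation_le {a : ℕ} (J : Matrix (Fin a) (Fin a) ℝ) (hJ : IsActivation J) :
    F.op J ≤ 1 := by
  apply F.op_le _ _ _ _ zero_le_one
  intro x
  rw [one_mul]
  apply F.mono
  intro i
  have hdiag : J.mulVec x i = J i i * x i := by
    rw [Matrix.mulVec, dotProduct]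
    rw [Finset.sum_eq_single i]
    · intro b _ hb
      rw [hJ.2 i b (Ne.symm hb), zero_mul]
    · simp
  rw [hdiag, abs_mul]
  rcases hJ.1 i with h | h <;> simp [h]

lemma op_innerProdFrom (c : ℕ → ℕ) (W : ∀ m, Matrix (Fin (c (m+1))) (Fin (c m)) ℝ)
    (J : ∀ m, Matrix (Fin (c (m+1))) (Fin (c (m+1))) ℝ) (hJ : ∀ m, IsActivation (J m))
    (a : ℕ) : ∀ m : ℕ, F.op (innerProdFrom c W J a m) ≤ ∏ i ∈ Finset.range m, F.op (W (a + i))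
  | 0 => by simpa [innerProdFrom] using F.op_one_le (c a)
  | m+1 => by
    rw [innerProdFrom, Finset.prod_range_succ]
    calc F.op ((J (a + m) * W (a + m)) * innerProdFrom c W J a m)
        ≤ F.op (J (a + m) * W (a + m)) * F.op (innerProdFrom c W J a m) := F.op_mul_le _ _ _ _ _
      _ ≤ (F.op (J (a + m)) * F.op (W (a + m))) * F.op (innerProdFrom c W J a m) := by
          apply mul_le_mul_of_nonneg_right (F.op_mul_le _ _ _ _ _) (F.op_nonneg _ _ _)
      _ ≤ (1 * F.op (W (a + m))) * (∏ i ∈ Finset.range m, F.op (W (a + i))) := by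
          apply mul_le_mul
          · exact mul_le_mul_of_nonneg_right (op_activation_le F _ (hJ _))
              (F.op_nonneg _ _ _)
          · exact op_innerProdFrom c W J hJ a m
          · exact F.op_nonneg _ _ _
          · have := F.op_nonneg _ _ (W (a+m)); nlinarith [F.op_nonneg _ _ (W (a+m))]
      _ = (∏ i ∈ Finset.range m, F.op (W (a + i))) * F.op (W (a + m)) := by ring

end Aux


section Prodd
variable {α : Type*} [Monoid α]

/-- `ProdT f s t = f (t-1) * ⋯ * f s` (empty product if `t ≤ s`). -/
def ProdT (f : ℕ → α) (s t : ℕ) : α := ((List.range' s (t - s)).reverse.map f).prod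

lemma prodSeg_eq_prodT (f : ℕ → α) (a n : ℕ) : prodSeg f a n = ProdT f a (n+1) := rfl

lemma prodT_of_le (f : ℕ → α) {s t : ℕ} (h : t ≤ s) : ProdT f s t = 1 := by
  unfold ProdT
  rw [Nat.sub_eq_zero_of_le h]
  simp

lemma prodT_succ (f : ℕ → α) {s t : ℕ} (h : s ≤ t) : ProdT f s (t+1) = f t * ProdT f s t := by
  unfold ProdT
  rw [show t + 1 - s = (t - s) + 1 by omega, List.range'_concat,
    show s + 1 * (t - s) = t by omega]
  simp

end Prodd

section Key
variable (F : NormFamily) {d : ℕ}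

lemma expansion (P E : ℕ → Matrix (Fin d) (Fin d) ℝ) :
    ∀ t, ProdT (fun k => P k + E k) 0 t
      = ProdT E 0 t + ∑ k ∈ Finset.range t, ProdT E (k+1) t * (P k * ProdT (fun k => P k + E k) 0 k)
  | 0 => by simp [prodT_of_le]
  | t+1 => by
    have ih := expansion P E t
    have hsum : ∀ k ∈ Finset.range t,
        E t * (ProdT E (k+1) t * (P k * ProdT (fun k => P k + E k) 0 k))
        = ProdT E (k+1) (t+1) * (P k * ProdT (fun k => P k + E k) 0 k) := by
      intro k hk
      rw [prodT_succ E (Finset.mem_range.mp hk), mul_assoc]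
    have step : E t * ProdT (fun k => P k + E k) 0 t
        = ProdT E 0 (t+1)
          + ∑ k ∈ Finset.range t, ProdT E (k+1) (t+1) * (P k * ProdT (fun k => P k + E k) 0 k) := by
      rw [ih, mul_add, Finset.mul_sum, prodT_succ E (Nat.zero_le t)]
      congr 1
      exact Finset.sum_congr rfl hsum
    rw [prodT_succ (fun k => P k + E k) (Nat.zero_le t)]
    show (P t + E t) * ProdT (fun k => P k + E k) 0 t = _
    rw [add_mul, step, Finset.sum_range_succ, prodT_of_le E (le_refl (t+1)), one_mul]
    abel

lemma prodT_diagonal (E : ℕ → Matrix (Fin d) (Fin d) ℝ) (hE : ∀ k, IsActivation (E k)) (a : ℕ) :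
    ∀ t, ProdT E a t = Matrix.diagonal (fun i => ∏ s ∈ Finset.Ico a t, E s i i)
  | 0 => by
    rw [prodT_of_le E (Nat.zero_le a)]
    simp
  | t+1 => by
    by_cases h : a ≤ t
    · rw [prodT_succ E h, prodT_diagonal E hE a t]
      have hEt : E t = Matrix.diagonal (fun i => E t i i) := by
        ext i j
        by_cases hij : i = j
        · subst hij; simp
        · rw [(hE t).2 i j hij, Matrix.diagonal_apply_ne _ hij]
      rw [hEt, Matrix.diagonal_mul_diagonal]
      apply congrArg Matrix.diagonal
      funext i
      rw [Finset.prod_Ico_succ_top h, mul_comm]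
    · rw [prodT_of_le E (by omega)]
      rw [Finset.Ico_eq_empty (by omega)]
      simp

lemma prodT_stab (E : ℕ → Matrix (Fin d) (Fin d) ℝ) (hE : ∀ k, IsActivation (E k)) (a : ℕ) :
    ∃ T, ∀ t, T ≤ t → ProdT E a t = ProdT E a T := by
  have hent : ∀ i : Fin d, ∃ T, ∀ t, T ≤ t →
      (∏ s ∈ Finset.Ico a t, E s i i) = ∏ s ∈ Finset.Ico a T, E s i i := by
    intro i
    by_cases h : ∃ s, a ≤ s ∧ E s i i = 0
    · obtain ⟨s, has, hs⟩ := h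
      refine ⟨s+1, fun t ht => ?_⟩
      rw [Finset.prod_eq_zero (Finset.mem_Ico.mpr ⟨has, by omega⟩) hs,
        Finset.prod_eq_zero (Finset.mem_Ico.mpr ⟨has, by omega⟩) hs]
    · push_neg at h
      refine ⟨0, fun t _ => ?_⟩
      rw [Finset.prod_eq_one, Finset.prod_eq_one]
      · intro s hs
        rcases ((hE s).1 i) with h0 | h1
        · exact absurd h0 (h s (Finset.mem_Ico.mp hs).1)
        · exact h1
      · intro s hs
        rcases ((hE s).1 i) with h0 | h1
        · exact absurd h0 (h s (Finset.mem_Ico.mp hs).1)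
        · exact h1
  choose T hT using hent
  refine ⟨Finset.univ.sup T, fun t ht => ?_⟩
  rw [prodT_diagonal E hE, prodT_diagonal E hE]
  apply congrArg Matrix.diagonal
  funext i
  have hTi : T i ≤ Finset.univ.sup T := Finset.le_sup (Finset.mem_univ i)
  rw [hT i t (le_trans hTi ht), hT i _ hTi]

lemma N_neg (a : ℕ) (y : Fin a → ℝ) : F.N a (-y) = F.N a y := by
  simpa using F.smul_eq a (-1) y

lemma op_sub_le (a b : ℕ) (A B : Matrix (Fin a) (Fin b) ℝ) :
    F.op (A - B) ≤ F.op A + F.op B := by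
  apply F.op_le _ _ _ _ (add_nonneg (F.op_nonneg _ _ _) (F.op_nonneg _ _ _))
  intro x
  rw [Matrix.sub_mulVec]
  calc F.N a (A.mulVec x - B.mulVec x)
      = F.N a (A.mulVec x + -(B.mulVec x)) := by rw [sub_eq_add_neg]
    _ ≤ F.N a (A.mulVec x) + F.N a (-(B.mulVec x)) := F.add_le _ _ _
    _ = F.N a (A.mulVec x) + F.N a (B.mulVec x) := by rw [N_neg F]
    _ ≤ F.op A * F.N b x + F.op B * F.N b x :=
        add_le_add (F.N_mulVec_le _ _ _ _) (F.N_mulVec_le _ _ _ _)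
    _ = (F.op A + F.op B) * F.N b x := by ring

lemma op_zero_le (a b : ℕ) : F.op (0 : Matrix (Fin a) (Fin b) ℝ) ≤ 0 := by
  apply F.op_le _ _ _ _ le_rfl
  intro x
  simp [Matrix.zero_mulVec, F.N_zero]

lemma op_sum_le {ι : Type*} (a b : ℕ) (s : Finset ι) (f : ι → Matrix (Fin a) (Fin b) ℝ) :
    F.op (∑ x ∈ s, f x) ≤ ∑ x ∈ s, F.op (f x) := by
  classical
  induction s using Finset.cons_induction with
  | empty => simpa using op_zero_le F a b
  | cons j t hj ih =>
    rw [Finset.sum_cons, Finset.sum_cons]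
    exact le_trans (F.op_add_le _ _ _ _) (by linarith)

lemma op_prodT_one (E : ℕ → Matrix (Fin d) (Fin d) ℝ) (hE : ∀ k, IsActivation (E k)) (a : ℕ) :
    ∀ t, F.op (ProdT E a t) ≤ 1
  | 0 => by
    rw [prodT_of_le E (Nat.zero_le a)]
    exact F.op_one_le d
  | t+1 => by
    by_cases h : a ≤ t
    · rw [prodT_succ E h]
      calc F.op (E t * ProdT E a t) ≤ F.op (E t) * F.op (ProdT E a t) := F.op_mul_le _ _ _ _ _
        _ ≤ 1 * 1 := mul_le_mul (op_activation_le F _ (hE t)) (op_prodT_one E hE a t)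
            (F.op_nonneg _ _ _) zero_le_one
        _ = 1 := by ring
    · rw [prodT_of_le E (by omega)]
      exact F.op_one_le d

lemma op_prodT_le (f : ℕ → Matrix (Fin d) (Fin d) ℝ) (g : ℕ → ℝ)
    (hg : ∀ k, 0 ≤ g k) (h : ∀ k, F.op (f k) ≤ g k) :
    ∀ t, F.op (ProdT f 0 t) ≤ ∏ k ∈ Finset.range t, g k
  | 0 => by
    rw [prodT_of_le f le_rfl]
    simpa using F.op_one_le d
  | t+1 => by
    rw [prodT_succ f (Nat.zero_le t), Finset.prod_range_succ, mul_comm (∏ k ∈ Finset.range t, g k)]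
    calc F.op (f t * ProdT f 0 t) ≤ F.op (f t) * F.op (ProdT f 0 t) := F.op_mul_le _ _ _ _ _
      _ ≤ g t * ∏ k ∈ Finset.range t, g k :=
          mul_le_mul (h t) (op_prodT_le f g hg h t) (F.op_nonneg _ _ _) (hg t)

lemma key (P E : ℕ → Matrix (Fin d) (Fin d) ℝ) (p : ℕ → ℝ)
    (hE : ∀ k, IsActivation (E k)) (hP : ∀ k, F.op (P k) ≤ p k) (hp : ∀ k, 0 ≤ p k)
    (hsum : Summable p) :
    ∃ L, Tendsto (fun t => ProdT (fun k => P k + E k) 0 t) atTop (nhds L) := by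
  set B : ℕ → Matrix (Fin d) (Fin d) ℝ := fun k => P k + E k with hB
  set S : ℝ := ∑' k, p k with hS
  set C : ℝ := Real.exp S with hC
  have hS0 : 0 ≤ S := tsum_nonneg hp
  have hC1 : (1:ℝ) ≤ C := Real.one_le_exp hS0
  have hC0 : (0:ℝ) < C := lt_of_lt_of_le one_pos hC1
  -- uniform bound on partial products
  have hGb : ∀ t, F.op (ProdT B 0 t) ≤ C := by
    intro t
    have h1 : F.op (ProdT B 0 t) ≤ ∏ k ∈ Finset.range t, (p k + 1) := by
      apply op_prodT_le F B (fun k => p k + 1) (fun k => by have := hp k; positivity)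
      intro k
      calc F.op (B k) ≤ F.op (P k) + F.op (E k) := F.op_add_le _ _ _ _
        _ ≤ p k + 1 := add_le_add (hP k) (op_activation_le F _ (hE k))
    have h2 : ∏ k ∈ Finset.range t, (p k + 1) ≤ Real.exp (∑ k ∈ Finset.range t, p k) := by
      rw [Real.exp_sum]
      apply Finset.prod_le_prod
      · intro k _; linarith [hp k]
      · intro k _
        have := Real.add_one_le_exp (p k)
        linarith
    have h3 : (∑ k ∈ Finset.range t, p k) ≤ S := Summable.sum_le_tsum _ (fun k _ => hp k) hsum
    calc F.op (ProdT B 0 t) ≤ Real.exp (∑ k ∈ Finset.range t, p k) := le_trans h1 h2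
      _ ≤ C := Real.exp_le_exp.mpr h3
  -- main Cauchy-type estimate
  have main : ∀ ε : ℝ, 0 < ε → ∃ N, ∀ t t', N ≤ t → t ≤ t' →
      F.op (ProdT B 0 t' - ProdT B 0 t) ≤ ε := by
    intro ε hε
    set δ : ℝ := ε / (2 * C) with hδdef
    have hδ : 0 < δ := by positivity
    obtain ⟨K, hK⟩ : ∃ K, S - (∑ k ∈ Finset.range K, p k) < δ := by
      have := hsum.hasSum.tendsto_sum_nat
      rw [Metric.tendsto_atTop] at this
      obtain ⟨K, hK⟩ := this δ hδ
      refine ⟨K, ?_⟩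
      have := hK K le_rfl
      rw [Real.dist_eq, abs_sub_lt_iff] at this
      linarith [this.2]
    have htail : ∀ t, K ≤ t → (∑ k ∈ Finset.Ico K t, p k) < δ := by
      intro t ht
      have h1 : (∑ k ∈ Finset.Ico K t, p k)
          = (∑ k ∈ Finset.range t, p k) - (∑ k ∈ Finset.range K, p k) := by
        rw [Finset.sum_Ico_eq_sub _ ht]
      have h2 : (∑ k ∈ Finset.range t, p k) ≤ S := Summable.sum_le_tsum _ (fun k _ => hp k) hsum
      linarith
    choose T hT using fun a => prodT_stab E hE a
    set N : ℕ := max K ((Finset.range (K+1)).sup T) with hN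
    have hstab : ∀ a, a ≤ K → ∀ t t', N ≤ t → N ≤ t' → ProdT E a t = ProdT E a t' := by
      intro a ha t t' ht ht'
      have hTa : T a ≤ N := le_trans (Finset.le_sup (Finset.mem_range.mpr (by omega)))
        (le_max_right _ _)
      rw [hT a t (le_trans hTa ht), hT a t' (le_trans hTa ht')]
    refine ⟨N, fun t t' ht htt' => ?_⟩
    have hKN : K ≤ N := le_max_left _ _
    have hKt : K ≤ t := le_trans hKN ht
    have hKt' : K ≤ t' := le_trans hKt htt'
    have hNt' : N ≤ t' := le_trans ht htt'
    have hsplit : ∀ u, K ≤ u → N ≤ u →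
        ProdT B 0 u = ProdT E 0 u + ((∑ k ∈ Finset.range K, ProdT E (k+1) N * (P k * ProdT B 0 k))
          + ∑ k ∈ Finset.Ico K u, ProdT E (k+1) u * (P k * ProdT B 0 k)) := by
      intro u hKu hNu
      rw [show ProdT B 0 u = ProdT (fun k => P k + E k) 0 u from rfl, expansion P E u]
      congr 1
      rw [Finset.range_eq_Ico, ← Finset.sum_Ico_consecutive _ (Nat.zero_le K) hKu,
        ← Finset.range_eq_Ico]
      congr 1
      apply Finset.sum_congr rfl
      intro k hk
      rw [hstab (k+1) (Finset.mem_range.mp hk) u N hNu (le_refl N)]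
    have hE0 : ProdT E 0 t' = ProdT E 0 t := hstab 0 (Nat.zero_le K) t' t hNt' ht
    rw [hsplit t' hKt' hNt', hsplit t hKt ht, hE0]
    have hdiff : ProdT E 0 t + ((∑ k ∈ Finset.range K, ProdT E (k+1) N * (P k * ProdT B 0 k))
          + ∑ k ∈ Finset.Ico K t', ProdT E (k+1) t' * (P k * ProdT B 0 k))
        - (ProdT E 0 t + ((∑ k ∈ Finset.range K, ProdT E (k+1) N * (P k * ProdT B 0 k))
          + ∑ k ∈ Finset.Ico K t, ProdT E (k+1) t * (P k * ProdT B 0 k)))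
        = (∑ k ∈ Finset.Ico K t', ProdT E (k+1) t' * (P k * ProdT B 0 k))
          - ∑ k ∈ Finset.Ico K t, ProdT E (k+1) t * (P k * ProdT B 0 k) := by
      abel
    rw [hdiff]
    have hterm : ∀ u, ∀ k, F.op (ProdT E (k+1) u * (P k * ProdT B 0 k)) ≤ p k * C := by
      intro u k
      calc F.op (ProdT E (k+1) u * (P k * ProdT B 0 k))
          ≤ F.op (ProdT E (k+1) u) * F.op (P k * ProdT B 0 k) := F.op_mul_le _ _ _ _ _
        _ ≤ 1 * (F.op (P k) * F.op (ProdT B 0 k)) := by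
            apply mul_le_mul (op_prodT_one F E hE _ u) (F.op_mul_le _ _ _ _ _)
              (F.op_nonneg _ _ _) zero_le_one
        _ ≤ 1 * (p k * C) := by
            apply mul_le_mul_of_nonneg_left _ zero_le_one
            exact mul_le_mul (hP k) (hGb k) (F.op_nonneg _ _ _) (le_trans (F.op_nonneg _ _ _) (hP k))
        _ = p k * C := one_mul _
    have hsum1 : ∀ u, K ≤ u → F.op (∑ k ∈ Finset.Ico K u, ProdT E (k+1) u * (P k * ProdT B 0 k))
        ≤ δ * C := by
      intro u hu
      calc F.op (∑ k ∈ Finset.Ico K u, ProdT E (k+1) u * (P k * ProdT B 0 k))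
          ≤ ∑ k ∈ Finset.Ico K u, F.op (ProdT E (k+1) u * (P k * ProdT B 0 k)) :=
            op_sum_le F _ _ _ _
        _ ≤ ∑ k ∈ Finset.Ico K u, p k * C := Finset.sum_le_sum (fun k _ => hterm u k)
        _ = (∑ k ∈ Finset.Ico K u, p k) * C := by rw [Finset.sum_mul]
        _ ≤ δ * C := mul_le_mul_of_nonneg_right (le_of_lt (htail u hu)) (le_of_lt hC0)
    calc F.op ((∑ k ∈ Finset.Ico K t', ProdT E (k+1) t' * (P k * ProdT B 0 k))
          - ∑ k ∈ Finset.Ico K t, ProdT E (k+1) t * (P k * ProdT B 0 k))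
        ≤ F.op (∑ k ∈ Finset.Ico K t', ProdT E (k+1) t' * (P k * ProdT B 0 k))
          + F.op (∑ k ∈ Finset.Ico K t, ProdT E (k+1) t * (P k * ProdT B 0 k)) :=
          op_sub_le F _ _ _ _
      _ ≤ δ * C + δ * C := add_le_add (hsum1 t' hKt') (hsum1 t hKt)
      _ = ε := by
          field_simp [hδdef]
          rw [hδdef, div_mul_eq_mul_div, div_mul_eq_mul_div, div_eq_iff (by positivity)]
          ring
  -- entrywise Cauchy sequences
  have hcauchy : ∀ i j : Fin d, ∃ l, Tendsto (fun t => ProdT B 0 t i j) atTop (nhds l) := by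
    intro i j
    apply cauchySeq_tendsto_of_complete
    rw [Metric.cauchySeq_iff']
    intro ε hε
    set κ : ℝ := F.N d (Pi.single j 1) / F.N d (Pi.single i 1) with hκ
    have hκ0 : 0 ≤ κ := div_nonneg (F.N_nonneg _ _) (F.N_nonneg _ _)
    obtain ⟨N, hN⟩ := main (ε / (2 * (κ + 1))) (by positivity)
    refine ⟨N, fun n hn => ?_⟩
    have h1 : |(ProdT B 0 n - ProdT B 0 N) i j| ≤ F.op (ProdT B 0 n - ProdT B 0 N) * κ :=
      F.entry_abs_le _ _ _ i j
    have h2 : F.op (ProdT B 0 n - ProdT B 0 N) ≤ ε / (2 * (κ + 1)) := hN N n le_rfl hn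
    have h3 : F.op (ProdT B 0 n - ProdT B 0 N) * κ ≤ (ε / (2 * (κ + 1))) * (κ + 1) :=
      mul_le_mul h2 (by linarith) hκ0 (by positivity)
    have h4 : (ε / (2 * (κ + 1))) * (κ + 1) = ε / 2 := by
      field_simp
    rw [Real.dist_eq]
    have h5 : (ProdT B 0 n - ProdT B 0 N) i j = ProdT B 0 n i j - ProdT B 0 N i j :=
      Matrix.sub_apply _ _ _ _
    rw [← h5]
    calc |(ProdT B 0 n - ProdT B 0 N) i j| ≤ ε / 2 := by linarith
      _ < ε := by linarith
  choose l hl using hcauchy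
  refine ⟨Matrix.of l, ?_⟩
  apply tendsto_pi_nhds.mpr
  intro i
  rw [tendsto_pi_nhds]
  intro j
  exact hl i j

end Key

theorem stmt2 (F : NormFamily)
    (d : ℕ) (hd : 0 < d)
    (q : ℕ → ℕ) (hq : ∀ k, 0 < q k) (hqb : ∃ Q, ∀ k, q k ≤ Q)
    (c : ℕ → ℕ → ℕ) (hcpos : ∀ k m, m ≤ q k → 0 < c k m)
    (hc0 : ∀ k, c k 0 = d) (hcq : ∀ k, c k (q k) = d)
    (W : ∀ k m, Matrix (Fin (c k (m+1))) (Fin (c k m)) ℝ)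
    (hW : Summable fun k => ∏ m ∈ Finset.range (q k), F.op (W k m)) :
    ∀ J : ∀ k m, Matrix (Fin (c k (m+1))) (Fin (c k (m+1))) ℝ,
      (∀ k m, IsActivation (J k m)) →
        ∃ L, Tendsto (fun n => Aseq d q hq c hc0 hcq W J n) atTop (nhds L) := by
  intro J hJ
  set P : ℕ → Matrix (Fin d) (Fin d) ℝ := fun k =>
    mcast ((congrArg (c k) (Nat.zero_add (q k))).trans (hcq k)) (hc0 k)
      (innerProdFrom (c k) (W k) (J k) 0 (q k)) with hPdef
  set E : ℕ → Matrix (Fin d) (Fin d) ℝ := fun k =>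
    mcast (show c k (q k - 1 + 1) = d from
        (congrArg (c k) (Nat.succ_pred_eq_of_pos (hq k))).trans (hcq k))
      (show c k (q k - 1 + 1) = d from
        (congrArg (c k) (Nat.succ_pred_eq_of_pos (hq k))).trans (hcq k))
      (J k (q k - 1)) with hEdef
  have hP : ∀ k, F.op (P k) ≤ ∏ m ∈ Finset.range (q k), F.op (W k m) := by
    intro k
    rw [hPdef]
    simp only []
    rw [op_mcast]
    have h := op_innerProdFrom F (c k) (W k) (J k) (fun m => hJ k m) 0 (q k)
    have heq : ∀ i : ℕ, F.op (W k (0 + i)) = F.op (W k i) := by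
      intro i
      rw [Nat.zero_add]
    calc F.op (innerProdFrom (c k) (W k) (J k) 0 (q k))
        ≤ ∏ i ∈ Finset.range (q k), F.op (W k (0 + i)) := h
      _ = ∏ m ∈ Finset.range (q k), F.op (W k m) := Finset.prod_congr rfl fun i _ => heq i
  have hE : ∀ k, IsActivation (E k) := by
    intro k
    exact isActivation_mcast _ _ (hJ k (q k - 1))
  obtain ⟨L, hL⟩ := key F P E (fun k => ∏ m ∈ Finset.range (q k), F.op (W k m)) hE hP
    (fun k => Finset.prod_nonneg fun m _ => F.op_nonneg _ _ _) hW
  refine ⟨L, ?_⟩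
  have heq : ∀ n, Aseq d q hq c hc0 hcq W J n = ProdT (fun k => P k + E k) 0 (n+1) := by
    intro n
    rfl
  have hcomp := hL.comp (tendsto_add_atTop_nat 1)
  simpa [heq, Function.comp_def] using hcomp

end
end
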